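/- Let ℂF : ℂ² → ℂ² be the complexification of Pinchuk's map and let f be the Pinchuk polynomial. Then ℂF restricted to f⁻¹(0) ⊆ ℂ² is a two-to-one map from f⁻¹(0) onto the set {−1, 0} × (ℂ \ {0}): its image is exactly {−1, 0} × (ℂ \ {0}) and every point of the image has exactly two preimages in f⁻¹(0). -/

import Mathlib

noncomputable section

/-- The complex Pinchuk auxiliary polynomial `t = xy - 1`. -/
def cT (x y : ℂ) : ℂ := x * y - 1

/-- The complex Pinchuk auxiliary polynomial `h = t(xt + 1)`. -/
def cH (x y : ℂ) : ℂ := cT x y * (x * cT x y + 1)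

/-- The complex Pinchuk auxiliary polynomial `f = (xt+1)^2 (t^2 + y)`. -/
def cF (x y : ℂ) : ℂ := (x * cT x y + 1) ^ 2 * ((cT x y) ^ 2 + y)

/-- The complex Pinchuk polynomial `u(f,h)`. -/
def cU (f h : ℂ) : ℂ :=
  (1/4) * f * (75*f^3 + 300*f^2*h + 450*f*h^2 + 276*f^2 + 828*f*h + 48*h^2 + 364*f + 48*h)

/-- The complexification `ℂF : ℂ² → ℂ²` of Pinchuk's map, given by the same
    polynomials `p = f + h` and `q = -t² - 6th(h+1) + u(f,h)`. -/
def cPinchuk : ℂ × ℂ → ℂ × ℂ := fun v =>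
  (cF v.1 v.2 + cH v.1 v.2,
   -(cT v.1 v.2)^2 - 6 * cT v.1 v.2 * cH v.1 v.2 * (cH v.1 v.2 + 1)
     + cU (cF v.1 v.2) (cH v.1 v.2))

/-- A continuous map `g : X → Y` is *not proper at* `y ∈ Y` if there is no
    neighborhood `U` of `y` such that `g ⁻¹(cl U)` is compact. -/
def NotProperAt {X Y : Type*} [TopologicalSpace X] [TopologicalSpace Y]
    (g : X → Y) (y : Y) : Prop :=
  ¬ ∃ U ∈ nhds y, IsCompact (g ⁻¹' closure U)

/-- The zero set `f⁻¹(0) ⊆ ℂ²` of the Pinchuk polynomial `f`. -/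
def zeroF : Set (ℂ × ℂ) := {v | cF v.1 v.2 = 0}

/-- The set `{-1, 0} × (ℂ \ {0}) ⊆ ℂ²`. -/
def targetSet : Set (ℂ × ℂ) := {w | (w.1 = -1 ∨ w.1 = 0) ∧ w.2 ≠ 0}

private lemma sq_cases {t s : ℂ} (h : t ^ 2 = s ^ 2) : t = s ∨ t = -s := by
  have h2 : (t - s) * (t + s) = 0 := by linear_combination h
  rcases mul_eq_zero.mp h2 with h3 | h3
  · exact Or.inl (sub_eq_zero.mp h3)
  · exact Or.inr (eq_neg_of_add_eq_zero_left h3)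

/-- Every point of `zeroF` maps into `targetSet`. -/
private lemma maps_into (v : ℂ × ℂ) (hv : v ∈ zeroF) : cPinchuk v ∈ targetSet := by
  obtain ⟨x, y⟩ := v
  have hf : cF x y = 0 := hv
  have hf' : (x * cT x y + 1) ^ 2 * ((cT x y) ^ 2 + y) = 0 := hf
  simp only [cPinchuk, targetSet, Set.mem_setOf_eq]
  rcases mul_eq_zero.mp hf' with h1 | h2
  · -- x*t + 1 = 0 : the image point is (0, -t²) with t ≠ 0
    have hxt : x * cT x y + 1 = 0 := pow_eq_zero_iff two_ne_zero |>.mp h1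
    have htne : cT x y ≠ 0 := by
      intro h0
      rw [h0, mul_zero, zero_add] at hxt
      exact one_ne_zero hxt
    have hh : cH x y = 0 := by rw [cH, hxt, mul_zero]
    constructor
    · right
      rw [hf, hh, add_zero]
    · rw [hf, hh]
      simp only [cU]
      intro hcon
      apply htne
      have : (cT x y) ^ 2 = 0 := by linear_combination -hcon
      exact pow_eq_zero_iff two_ne_zero |>.mp this
  · -- t² + y = 0 : the image point is (-1, -t²) with t ≠ 0
    have hty : (cT x y) ^ 2 + y = 0 := h2
    have ht : cT x y = x * y - 1 := rfl
    have hy : y = -(cT x y) ^ 2 := by linear_combination hty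
    have key : x * (cT x y) ^ 2 + cT x y + 1 = 0 := by
      rw [ht] at hy ⊢
      linear_combination x * hy
    have htne : cT x y ≠ 0 := by
      intro h0
      rw [h0] at key
      simp at key
    have hh : cH x y = -1 := by
      rw [cH]
      linear_combination key
    constructor
    · left
      rw [hf, hh, zero_add]
    · rw [hf, hh]
      simp only [cU]
      intro hcon
      apply htne
      have : (cT x y) ^ 2 = 0 := by linear_combination -hcon
      exact pow_eq_zero_iff two_ne_zero |>.mp this

/-- Fiber description over `(0, -s²)`. -/
private lemma fiber_zero (s : ℂ) (hs : s ≠ 0) :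
    {v ∈ zeroF | cPinchuk v = (0, -s ^ 2)} =
      {((-1/s : ℂ), (-s - s ^ 2 : ℂ)), ((1/s : ℂ), (s - s ^ 2 : ℂ))} := by
  ext ⟨x, y⟩
  simp only [Set.mem_setOf_eq, Set.mem_insert_iff, Set.mem_singleton_iff, zeroF,
    cPinchuk, Prod.mk.injEq]
  constructor
  · rintro ⟨hf, hp, hq⟩
    have hh : cH x y = 0 := by linear_combination hp - hf
    rw [hf, hh] at hq
    simp only [cU] at hq
    have ht2 : (cT x y) ^ 2 = s ^ 2 := by linear_combination -hq
    have hh' : cT x y * (x * cT x y + 1) = 0 := hh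
    rcases mul_eq_zero.mp hh' with ht0 | hxt
    · rw [ht0] at ht2
      have h' : s ^ 2 = 0 := by linear_combination -ht2
      exact absurd (pow_eq_zero_iff two_ne_zero |>.mp h') hs
    · have ht : cT x y = x * y - 1 := rfl
      rcases sq_cases ht2 with hts | hts <;> rw [ht] at hts hxt
      · left
        have hxs : x * s + 1 = 0 := by linear_combination hxt - x * hts
        have hx : x = -1 / s := by
          field_simp
          linear_combination hxs
        have hy : y = -s - s ^ 2 := by
          linear_combination (-s) * hts + y * hxs
        exact ⟨hx, hy⟩
      · right
        have hxs : 1 - x * s = 0 := by linear_combination hxt - x * hts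
        have hx : x = 1 / s := by
          field_simp
          linear_combination -hxs
        have hy : y = s - s ^ 2 := by
          linear_combination s * hts + y * hxs
        exact ⟨hx, hy⟩
  · rintro (⟨hx, hy⟩ | ⟨hx, hy⟩) <;> subst hx <;> subst hy
    · have ht : cT (-1/s) (-s - s^2) = s := by rw [cT]; field_simp; ring
      have hxt1 : (-1/s : ℂ) * s + 1 = 0 := by field_simp; ring
      have hf : cF (-1/s) (-s - s^2) = 0 := by rw [cF, ht, hxt1]; ring
      have hh : cH (-1/s) (-s - s^2) = 0 := by rw [cH, ht, hxt1]; ring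
      exact ⟨hf, by rw [hf, hh]; ring, by rw [hf, hh, ht]; simp only [cU]; ring⟩
    · have ht : cT (1/s) (s - s^2) = -s := by rw [cT]; field_simp; ring
      have hxt1 : (1/s : ℂ) * -s + 1 = 0 := by field_simp; ring
      have hf : cF (1/s) (s - s^2) = 0 := by rw [cF, ht, hxt1]; ring
      have hh : cH (1/s) (s - s^2) = 0 := by rw [cH, ht, hxt1]; ring
      exact ⟨hf, by rw [hf, hh]; ring, by rw [hf, hh, ht]; simp only [cU]; ring⟩

/-- Fiber description over `(-1, -s²)`. -/
private lemma fiber_negone (s : ℂ) (hs : s ≠ 0) :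
    {v ∈ zeroF | cPinchuk v = (-1, -s ^ 2)} =
      {((-(s+1)/s^2 : ℂ), (-s ^ 2 : ℂ)), (((s-1)/s^2 : ℂ), (-s ^ 2 : ℂ))} := by
  ext ⟨x, y⟩
  simp only [Set.mem_setOf_eq, Set.mem_insert_iff, Set.mem_singleton_iff, zeroF,
    cPinchuk, Prod.mk.injEq]
  constructor
  · rintro ⟨hf, hp, hq⟩
    have hh : cH x y = -1 := by linear_combination hp - hf
    rw [hf, hh] at hq
    simp only [cU] at hq
    have ht2 : (cT x y) ^ 2 = s ^ 2 := by linear_combination -hq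
    have hf' : (x * cT x y + 1) ^ 2 * ((cT x y) ^ 2 + y) = 0 := hf
    rcases mul_eq_zero.mp hf' with h1 | h2
    · have hxt : x * cT x y + 1 = 0 := pow_eq_zero_iff two_ne_zero |>.mp h1
      have hh' : cT x y * (x * cT x y + 1) = -1 := hh
      have : (1 : ℂ) = 0 := by linear_combination hh' - cT x y * hxt
      exact absurd this one_ne_zero
    · have hy : y = -s ^ 2 := by linear_combination h2 - ht2
      have ht : cT x y = x * y - 1 := rfl
      rcases sq_cases ht2 with hts | hts <;> rw [ht] at hts
      · left
        have hxs : x * s ^ 2 + s + 1 = 0 := by linear_combination x * hy - hts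
        have hx : x = -(s+1)/s^2 := by
          field_simp
          linear_combination hxs
        exact ⟨hx, hy⟩
      · right
        have hxs : x * s ^ 2 = s - 1 := by linear_combination x * hy - hts
        have hx : x = (s-1)/s^2 := by
          field_simp
          linear_combination hxs
        exact ⟨hx, hy⟩
  · rintro (⟨hx, hy⟩ | ⟨hx, hy⟩) <;> subst hx <;> subst hy
    · have ht : cT (-(s+1)/s^2) (-s^2) = s := by rw [cT]; field_simp; ring
      have hf : cF (-(s+1)/s^2) (-s^2) = 0 := by rw [cF, ht]; ring
      have hh : cH (-(s+1)/s^2) (-s^2) = -1 := by rw [cH, ht]; field_simp; ring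
      exact ⟨hf, by rw [hf, hh]; ring, by rw [hf, hh, ht]; simp only [cU]; ring⟩
    · have ht : cT ((s-1)/s^2) (-s^2) = -s := by rw [cT]; field_simp; ring
      have hf : cF ((s-1)/s^2) (-s^2) = 0 := by rw [cF, ht]; ring
      have hh : cH ((s-1)/s^2) (-s^2) = -1 := by rw [cH, ht]; field_simp; ring
      exact ⟨hf, by rw [hf, hh]; ring, by rw [hf, hh, ht]; simp only [cU]; ring⟩

/-- The complexified Pinchuk map restricted to `f⁻¹(0)` is a two-to-one map onto
    `{-1, 0} × (ℂ \ {0})`: its image is exactly this set and every point of it has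
    exactly two preimages in `f⁻¹(0)`. -/
theorem complex_pinchuk_two_to_one_on_f_zero :
    cPinchuk '' zeroF = targetSet ∧
    ∀ w ∈ targetSet, ∃ a b : ℂ × ℂ, a ≠ b ∧
      {v ∈ zeroF | cPinchuk v = w} = {a, b} := by
  have key : ∀ w ∈ targetSet, ∃ a b : ℂ × ℂ, a ≠ b ∧
      {v ∈ zeroF | cPinchuk v = w} = {a, b} := by
    intro w hw
    obtain ⟨hw1, hw2⟩ := hw
    obtain ⟨s, hsq⟩ := IsAlgClosed.exists_pow_nat_eq (-w.2) (n := 2) (by norm_num)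
    have hsne : s ≠ 0 := by
      intro h0
      apply hw2
      rw [h0] at hsq
      simpa using hsq.symm
    have hq2 : w.2 = -s ^ 2 := by linear_combination hsq
    rcases hw1 with h | h
    · refine ⟨((-(s+1)/s^2 : ℂ), (-s ^ 2 : ℂ)), (((s-1)/s^2 : ℂ), (-s ^ 2 : ℂ)), ?_, ?_⟩
      · intro hcon
        have h1 : (-(s+1)/s^2 : ℂ) = ((s-1)/s^2 : ℂ) := congrArg Prod.fst hcon
        apply hsne
        field_simp at h1
        linear_combination -h1/2
      · have hw' : w = (-1, -s ^ 2) := Prod.ext h hq2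
        rw [hw']
        exact fiber_negone s hsne
    · refine ⟨((-1/s : ℂ), (-s - s ^ 2 : ℂ)), ((1/s : ℂ), (s - s ^ 2 : ℂ)), ?_, ?_⟩
      · intro hcon
        have h1 : (-1/s : ℂ) = (1/s : ℂ) := congrArg Prod.fst hcon
        field_simp at h1
        exact absurd h1 (by norm_num)
      · have hw' : w = (0, -s ^ 2) := Prod.ext h hq2
        rw [hw']
        exact fiber_zero s hsne
  constructor
  · ext w
    constructor
    · rintro ⟨v, hv, rfl⟩
      exact maps_into v hv
    · intro hw
      obtain ⟨a, b, _, hset⟩ := key w hw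
      have ha : a ∈ {v ∈ zeroF | cPinchuk v = w} := by rw [hset]; left; rfl
      exact ⟨a, ha.1, ha.2⟩
  · exact key
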